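/- Let β̃, ρ_F, γ, ν, S_F > 0, set μ = 1 + 2 β̃ ρ_F γ / ν (so μ > 1), and define on (0,∞) the function V^∞(s) = C₁ s^{−(1+μ)} exp( − (μ−1) S_F / s ) for any constant C₁ > 0. Then V^∞ satisfies, for every s > 0, the stationary Fokker–Planck equation d/ds [ β̃ ρ_F γ (S_F − s) V^∞(s) ] = (ν/2) d²/ds² ( s² V^∞(s) ); equivalently, the zero-flux relation (ν/2) d/ds ( s² V^∞(s) ) = β̃ ρ_F γ (S_F − s) V^∞(s) holds. -/

import Mathlib

open Real

private lemma flux_eq (βt ρF γ ν SF C₁ : ℝ)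
    (hν : 0 < ν) (μ : ℝ) (hμ : μ = 1 + 2 * βt * ρF * γ / ν) :
    ∀ z : ℝ, 0 < z →
      (ν / 2) *
          deriv (fun w : ℝ =>
            w ^ 2 * (C₁ * w ^ (-(1 + μ)) * Real.exp (-(μ - 1) * SF / w))) z
        = βt * ρF * γ * (SF - z) *
            (C₁ * z ^ (-(1 + μ)) * Real.exp (-(μ - 1) * SF / z)) := by
  intro z hz
  have hz' : z ≠ 0 := hz.ne'
  -- derivative of the exponent argument
  have hinv : HasDerivAt (fun w : ℝ => -(μ - 1) * SF / w)
      ((μ - 1) * SF / z ^ 2) z := by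
    have h := (hasDerivAt_inv hz').const_mul (-(μ - 1) * SF)
    have hfun : (fun w : ℝ => -(μ - 1) * SF / w) = fun y : ℝ => -(μ - 1) * SF * y⁻¹ := by
      funext w; rw [div_eq_mul_inv]
    rw [hfun]
    exact h.congr_deriv (by ring)
  have hexp : HasDerivAt (fun w : ℝ => Real.exp (-(μ - 1) * SF / w))
      (Real.exp (-(μ - 1) * SF / z) * ((μ - 1) * SF / z ^ 2)) z := hinv.exp
  have hrpow : HasDerivAt (fun w : ℝ => w ^ (-(1 + μ)))
      (-(1 + μ) * z ^ (-(1 + μ) - 1)) z :=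
    Real.hasDerivAt_rpow_const (Or.inl hz')
  have hG : HasDerivAt (fun w : ℝ => C₁ * w ^ (-(1 + μ)) * Real.exp (-(μ - 1) * SF / w))
      ((C₁ * (-(1 + μ) * z ^ (-(1 + μ) - 1))) * Real.exp (-(μ - 1) * SF / z)
        + (C₁ * z ^ (-(1 + μ))) * (Real.exp (-(μ - 1) * SF / z) * ((μ - 1) * SF / z ^ 2))) z :=
    (hrpow.const_mul C₁).mul hexp
  have hF := (hasDerivAt_pow 2 z).mul hG
  rw [show (fun w : ℝ => w ^ 2 * (C₁ * w ^ (-(1 + μ)) * Real.exp (-(μ - 1) * SF / w))) = ((fun x : ℝ => x ^ 2) * fun w => C₁ * w ^ (-(1 + μ)) * Real.exp (-(μ - 1) * SF / w)) from rfl, hF.deriv]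
  push_cast
  have hps : z ^ (-(1 + μ) - 1) = z ^ (-(1 + μ)) / z := by
    rw [Real.rpow_sub hz, Real.rpow_one]
  rw [hps]
  set P := z ^ (-(1 + μ))
  set E := Real.exp (-(μ - 1) * SF / z)
  subst hμ
  field_simp
  ring

theorem stmt_14 (βt ρF γ ν SF C₁ : ℝ)
    (hβ : 0 < βt) (hρF : 0 < ρF) (hγ : 0 < γ) (hν : 0 < ν) (hSF : 0 < SF)
    (hC₁ : 0 < C₁) (μ : ℝ) (hμ : μ = 1 + 2 * βt * ρF * γ / ν) :
    ∀ s : ℝ, 0 < s →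
      (deriv (fun z : ℝ =>
          βt * ρF * γ * (SF - z) *
            (C₁ * z ^ (-(1 + μ)) * Real.exp (-(μ - 1) * SF / z))) s
        = (ν / 2) *
            deriv (deriv (fun z : ℝ =>
              z ^ 2 * (C₁ * z ^ (-(1 + μ)) * Real.exp (-(μ - 1) * SF / z)))) s)
      ∧ ((ν / 2) *
            deriv (fun z : ℝ =>
              z ^ 2 * (C₁ * z ^ (-(1 + μ)) * Real.exp (-(μ - 1) * SF / z))) s
          = βt * ρF * γ * (SF - s) *
              (C₁ * s ^ (-(1 + μ)) * Real.exp (-(μ - 1) * SF / s))) := by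
  intro s hs
  have key := flux_eq βt ρF γ ν SF C₁ hν μ hμ
  refine ⟨?_, key s hs⟩
  have hev : (fun z : ℝ =>
      βt * ρF * γ * (SF - z) *
        (C₁ * z ^ (-(1 + μ)) * Real.exp (-(μ - 1) * SF / z)))
      =ᶠ[nhds s] (fun z : ℝ => (ν / 2) *
        deriv (fun w : ℝ =>
          w ^ 2 * (C₁ * w ^ (-(1 + μ)) * Real.exp (-(μ - 1) * SF / w))) z) := by
    filter_upwards [IsOpen.mem_nhds isOpen_Ioi hs] with z hz
    exact (key z hz).symm
  rw [hev.deriv_eq, deriv_const_mul_field]
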